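/- For a distribution function F on [0,∞) with F(0-)=0 and α>0, the tail of the Williamson transform satisfies 1-G_F(x) = α x^{-α} ∫_0^x t^{α-1}(1-F(t))dt for all x>0. -/

import Mathlib

open MeasureTheory Filter Topology Real Set

theorem stmt3 {Ω : Type*} [MeasurableSpace Ω] (μ : Measure Ω) [IsProbabilityMeasure μ]
    (X : Ω → ℝ) (hX : Measurable X) (hXnn : ∀ ω, 0 ≤ X ω)
    (α : ℝ) (hα : 0 < α)
    (F : ℝ → ℝ) (hF : ∀ x, F x = (μ {ω | X ω ≤ x}).toReal) :
    ∀ x > 0,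
      1 - (∫ ω in {ω | X ω ≤ x}, (1 - (X ω / x) ^ α) ∂μ)
        = α * x ^ (-α) * (∫ t in (0:ℝ)..x, t ^ (α - 1) * (1 - F t)) := by
  intro x hx
  classical
  set Y : Ω → ℝ := fun ω => min (X ω) x with hYdef
  have hYm : Measurable Y := hX.min measurable_const
  have hYnn : ∀ ω, 0 ≤ Y ω := fun ω => le_min (hXnn ω) hx.le
  have hYle : ∀ ω, Y ω ≤ x := fun ω => min_le_right _ _
  have hs : MeasurableSet {ω | X ω ≤ x} := hX measurableSet_Iic
  -- F facts
  have hFmono : Monotone F := by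
    intro s t hst
    rw [hF, hF]
    exact ENNReal.toReal_mono (measure_ne_top μ _)
      (measure_mono fun a ha => le_trans ha hst)
  have hFmeas : Measurable F := hFmono.measurable
  have hFle1 : ∀ t, F t ≤ 1 := by
    intro t
    rw [hF]
    exact ENNReal.toReal_le_of_le_ofReal zero_le_one (by simpa using prob_le_one)
  have hFnn : ∀ t, 0 ≤ F t := fun t => by rw [hF]; exact ENNReal.toReal_nonneg
  -- layer cake
  have g_intble : ∀ t > (0:ℝ), IntervalIntegrable (fun s => s ^ (α - 1)) volume 0 t :=
    fun t _ => intervalIntegral.intervalIntegrable_rpow' (by linarith)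
  have g_nn : ∀ᵐ t ∂(volume.restrict (Ioi (0:ℝ))), 0 ≤ t ^ (α - 1) := by
    rw [ae_restrict_iff' measurableSet_Ioi]
    exact ae_of_all _ fun t ht => (rpow_pos_of_pos ht _).le
  have key := lintegral_comp_eq_lintegral_meas_lt_mul μ (ae_of_all _ hYnn)
      hYm.aemeasurable g_intble g_nn
  have inner : ∀ ω, (∫ t in (0:ℝ)..Y ω, t ^ (α - 1)) = Y ω ^ α / α := by
    intro ω
    rw [integral_rpow (Or.inl (by linarith))]
    have h1 : α - 1 + 1 = α := by ring
    rw [h1, Real.zero_rpow hα.ne']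
    ring
  -- integrability of Y^α/α
  have hYint : Integrable (fun ω => Y ω ^ α) μ := by
    apply (integrable_const (x ^ α)).mono' ((Real.continuous_rpow_const hα.le).measurable.comp hYm).aestronglyMeasurable
    refine ae_of_all _ fun ω => ?_
    simp only [Function.comp_apply, Real.norm_eq_abs]
    rw [abs_of_nonneg (rpow_nonneg (hYnn ω) _)]
    exact rpow_le_rpow (hYnn ω) (hYle ω) hα.le
  have hYint' : Integrable (fun ω => Y ω ^ α / α) μ := hYint.div_const _
  -- LHS of key
  have keyL : (∫⁻ ω, ENNReal.ofReal (∫ t in (0:ℝ)..Y ω, t ^ (α - 1)) ∂μ)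
      = ENNReal.ofReal (∫ ω, Y ω ^ α / α ∂μ) := by
    rw [ofReal_integral_eq_lintegral_ofReal hYint'
      (ae_of_all _ fun ω => div_nonneg (rpow_nonneg (hYnn ω) _) hα.le)]
    congr 1
    ext ω
    rw [inner ω]
  -- RHS of key : restrict to Ioo 0 x
  have hgint : IntegrableOn (fun t => t ^ (α - 1) * (1 - F t)) (Ioo 0 x) volume := by
    have h1 : IntegrableOn (fun t => t ^ (α - 1)) (Ioo 0 x) volume := by
      exact (g_intble x hx).1.mono_set Ioo_subset_Ioc_self
    refine (Integrable.bdd_mul (c := 1) h1 ?_ ?_).congr (ae_of_all _ fun t => mul_comm _ _)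
    · exact ((measurable_const.sub hFmeas).aestronglyMeasurable)
    · refine ae_of_all _ fun t => ?_
      rw [Real.norm_eq_abs, abs_of_nonneg (by linarith [hFle1 t])]
      linarith [hFnn t]
  have keyR : (∫⁻ t in Ioi (0:ℝ), μ {a | t < Y a} * ENNReal.ofReal (t ^ (α - 1)))
      = ENNReal.ofReal (∫ t in Ioo (0:ℝ) x, t ^ (α - 1) * (1 - F t)) := by
    rw [← Ioc_union_Ioi_eq_Ioi hx.le,
      lintegral_union measurableSet_Ioi (Ioc_disjoint_Ioi le_rfl)]
    have hzero : (∫⁻ t in Ioi x, μ {a | t < Y a} * ENNReal.ofReal (t ^ (α - 1))) = 0 := by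
      rw [← lintegral_zero (μ := volume.restrict (Ioi x))]
      refine setLIntegral_congr_fun measurableSet_Ioi (fun t ht => ?_)
      have : {a | t < Y a} = (∅ : Set Ω) := by
        ext a
        simp only [mem_setOf_eq, mem_empty_iff_false, iff_false, not_lt]
        exact (hYle a).trans ht.le
      rw [this, measure_empty, zero_mul]
    rw [hzero, add_zero, setLIntegral_congr (Ioo_ae_eq_Ioc (a := (0:ℝ)) (b := x)).symm]
    rw [ofReal_integral_eq_lintegral_ofReal hgint ?_]
    · refine lintegral_congr_ae ?_
      filter_upwards [ae_restrict_mem measurableSet_Ioo] with t ht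
      have h1 : {a | t < Y a} = {ω | X ω ≤ t}ᶜ := by
        ext a
        simp only [hYdef, mem_setOf_eq, mem_compl_iff, lt_min_iff, not_le]
        exact and_iff_left ht.2
      have h2 : μ {a | t < Y a} = ENNReal.ofReal (1 - F t) := by
        rw [h1, prob_compl_eq_one_sub (show MeasurableSet {ω | X ω ≤ t} from hX measurableSet_Iic), hF,
          ENNReal.ofReal_sub _ ENNReal.toReal_nonneg, ENNReal.ofReal_one,
          ENNReal.ofReal_toReal (measure_ne_top μ _)]
      rw [h2, ← ENNReal.ofReal_mul (by linarith [hFle1 t]), mul_comm]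
    · filter_upwards [ae_restrict_mem measurableSet_Ioo] with t ht
      exact mul_nonneg (rpow_nonneg ht.1.le _) (by linarith [hFle1 t])
  -- conclude equality of real integrals
  have main : (∫ ω, Y ω ^ α / α ∂μ) = ∫ t in Ioo (0:ℝ) x, t ^ (α - 1) * (1 - F t) := by
    have h := keyL.symm.trans (key.trans keyR)
    rwa [ENNReal.ofReal_eq_ofReal_iff
      (integral_nonneg fun ω => div_nonneg (rpow_nonneg (hYnn ω) _) hα.le)
      (setIntegral_nonneg measurableSet_Ioo fun t ht =>
        mul_nonneg (rpow_nonneg ht.1.le _) (by linarith [hFle1 t]))] at h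
  -- rewrite interval integral
  have hIoc : (∫ t in (0:ℝ)..x, t ^ (α - 1) * (1 - F t))
      = ∫ t in Ioo (0:ℝ) x, t ^ (α - 1) * (1 - F t) := by
    rw [intervalIntegral.integral_of_le hx.le,
      setIntegral_congr_set (Ioo_ae_eq_Ioc (a := (0:ℝ)) (b := x)).symm]
  -- split ∫ Y^α
  have hsplit : (∫ ω, Y ω ^ α ∂μ)
      = (∫ ω in {ω | X ω ≤ x}, X ω ^ α ∂μ) + (μ {ω | X ω ≤ x}ᶜ).toReal * x ^ α := by
    rw [← integral_add_compl hs hYint]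
    congr 1
    · refine setIntegral_congr_fun hs fun ω hω => ?_
      simp only [hYdef]
      rw [min_eq_left hω]
    · rw [setIntegral_congr_fun hs.compl (g := fun _ => x ^ α)
        (fun ω hω => by simp only [hYdef]; rw [min_eq_right (le_of_lt (not_le.mp (by simpa using hω)))]),
        setIntegral_const, smul_eq_mul, measureReal_def]
  -- integrability of (X/x)^α on the set
  have hXα_int : IntegrableOn (fun ω => (X ω / x) ^ α) {ω | X ω ≤ x} μ := by
    apply (integrable_const (1:ℝ)).mono'
      (((Real.continuous_rpow_const hα.le).measurable.comp (hX.div_const x)).aestronglyMeasurable)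
    rw [ae_restrict_iff' hs]
    refine ae_of_all _ fun ω hω => ?_
    simp only [Function.comp_apply, Real.norm_eq_abs]
    rw [abs_of_nonneg (rpow_nonneg (div_nonneg (hXnn ω) hx.le) _)]
    calc (X ω / x) ^ α ≤ 1 ^ α :=
          rpow_le_rpow (div_nonneg (hXnn ω) hx.le) ((div_le_one hx).mpr hω) hα.le
      _ = 1 := Real.one_rpow α
  -- LHS expansion
  have hLHS : (∫ ω in {ω | X ω ≤ x}, (1 - (X ω / x) ^ α) ∂μ)
      = (μ {ω | X ω ≤ x}).toReal - (∫ ω in {ω | X ω ≤ x}, X ω ^ α ∂μ) * x ^ (-α) := by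
    rw [integral_sub (integrable_const 1).integrableOn hXα_int]
    congr 1
    · simp [measureReal_def]
    · rw [← integral_mul_const]
      refine setIntegral_congr_fun hs fun ω _ => ?_
      rw [Real.div_rpow (hXnn ω) hx.le, Real.rpow_neg hx.le, div_eq_mul_inv]
  -- final algebra
  have hxinv : x ^ (-α) * x ^ α = 1 := by
    rw [← Real.rpow_add hx]
    simp
  have hcompl : (μ {ω | X ω ≤ x}ᶜ).toReal = 1 - (μ {ω | X ω ≤ x}).toReal := by
    rw [prob_compl_eq_one_sub hs,
      ENNReal.toReal_sub_of_le prob_le_one ENNReal.one_ne_top, ENNReal.toReal_one]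
  have hJ : α * (∫ t in Ioo (0:ℝ) x, t ^ (α - 1) * (1 - F t)) = (∫ ω, Y ω ^ α ∂μ) := by
    rw [← main, integral_div]
    field_simp
  rw [hLHS, hIoc]
  have hswap : α * x ^ (-α) * (∫ t in Ioo (0:ℝ) x, t ^ (α - 1) * (1 - F t))
      = x ^ (-α) * (α * (∫ t in Ioo (0:ℝ) x, t ^ (α - 1) * (1 - F t))) := by ring
  rw [hswap, hJ, hsplit, hcompl]
  linear_combination ((μ {ω | X ω ≤ x}).toReal - 1) * hxinv
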